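/- arXiv:2303.14149 — 2 statements merged into one kernel-verified Lean document; each statement's English description precedes it below -/
import Mathlib

section
/- Let Ω ⊂ R^n be a strictly tessellating polytope and σ ∈ R_Ω^{nb} a neighbouring reflection with associated metric projection π_σ onto the affine subspace fixed by σ, and complementary projection π_σ^⊥ = id − π_σ. Then there exists a constant c > 0 such that for all r, r' ∈ Ω: |r − σ r'| ≥ c(|π_σ r − π_σ r'| + |π_σ^⊥ r + π_σ^⊥ r'|), and in particular |r − σ r'| ≥ c|r − r'|. -/
open MeasureTheory Metric Set
open scoped RealInnerProductSpace

noncomputable section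

abbrev Euc (n : ℕ) := EuclideanSpace ℝ (Fin n)

/-- `σ` is the (affine isometric) reflection across the hyperplane `{r | ⟪r, v⟫ = α}`
with unit normal `v`. -/
def IsHyperplaneReflection {n : ℕ} (v : Euc n) (α : ℝ) (σ : Euc n ≃ᵃⁱ[ℝ] Euc n) : Prop :=
  ‖v‖ = 1 ∧ ∀ r, σ r = r - (2 * (⟪r, v⟫ - α)) • v

private lemma refl_closer {n : ℕ} (v : Euc n) (hv : ‖v‖ = 1) (a : ℝ) (z q : Euc n)
    (hz : ⟪z, v⟫ < a) (hq : a < ⟪q, v⟫) :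
    ‖z - (q - (2 * (⟪q, v⟫ - a)) • v)‖ < ‖z - q‖ := by
  apply lt_of_pow_lt_pow_left₀ 2 (norm_nonneg _)
  have hzq : z - (q - (2 * (⟪q, v⟫ - a)) • v) = (z - q) + (2 * (⟪q, v⟫ - a)) • v := by abel
  rw [hzq, norm_add_sq_real]
  have h1 : ⟪z - q, (2 * (⟪q, v⟫ - a)) • v⟫ = (2 * (⟪q, v⟫ - a)) * (⟪z, v⟫ - ⟪q, v⟫) := by
    rw [real_inner_smul_right, inner_sub_left]
  have h2 : ‖(2 * (⟪q, v⟫ - a)) • v‖ ^ 2 = (2 * (⟪q, v⟫ - a)) ^ 2 := by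
    rw [norm_smul, hv, Real.norm_eq_abs, mul_one, sq_abs]
  rw [h1, h2]
  nlinarith [mul_pos (sub_pos.mpr hq) (sub_pos.mpr hz)]

/-- Points satisfying all the defining inequalities weakly lie in the closure of `Ω`. -/
private lemma mem_closure_of_weak {n m : ℕ} (v : Fin m → Euc n) (α : Fin m → ℝ)
    (Ω : Set (Euc n)) (hΩ : Ω = {r | ∀ j, α j < ⟪r, v j⟫}) (hne : Ω.Nonempty)
    (y : Euc n) (hy : ∀ j, α j ≤ ⟪y, v j⟫) : y ∈ closure Ω := by
  obtain ⟨q₀, hq₀⟩ := hne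
  rw [hΩ] at hq₀
  have hmem : ∀ k : ℕ, y + (1 / (k + 1 : ℝ)) • (q₀ - y) ∈ Ω := by
    intro k
    rw [hΩ]
    intro j
    have ht0 : 0 < 1 / (k + 1 : ℝ) := by positivity
    have ht1 : 1 / (k + 1 : ℝ) ≤ 1 := by
      rw [div_le_one (by positivity)]; linarith [Nat.cast_nonneg (α := ℝ) k]
    have hiq : ⟪y + (1 / (k + 1 : ℝ)) • (q₀ - y), v j⟫
        = ⟪y, v j⟫ + (1 / (k + 1 : ℝ)) * (⟪q₀, v j⟫ - ⟪y, v j⟫) := by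
      rw [inner_add_left, real_inner_smul_left, inner_sub_left]
    rw [hiq]
    nlinarith [hy j, hq₀ j]
  have htend : Filter.Tendsto (fun k : ℕ => y + (1 / (k + 1 : ℝ)) • (q₀ - y))
      Filter.atTop (nhds y) := by
    have h0 : Filter.Tendsto (fun k : ℕ => (1 / (k + 1 : ℝ))) Filter.atTop (nhds 0) :=
      tendsto_one_div_add_atTop_nhds_zero_nat
    have h1 := h0.smul_const (q₀ - y)
    rw [zero_smul] at h1
    have h2 := (tendsto_const_nhds (x := y) (f := Filter.atTop (α := ℕ))).add h1
    rw [add_zero] at h2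
    exact h2
  exact mem_closure_of_tendsto htend (Filter.Eventually.of_forall hmem)

private lemma dirichlet {n m : ℕ} (v : Fin m → Euc n) (α : Fin m → ℝ)
    (Ω : Set (Euc n)) (hΩ : Ω = {r | ∀ j, α j < ⟪r, v j⟫})
    (hne : Ω.Nonempty) (hΩo : IsOpen Ω)
    (σf : Fin m → (Euc n ≃ᵃⁱ[ℝ] Euc n))
    (hσf : ∀ j, IsHyperplaneReflection (v j) (α j) (σf j))
    (G : Subgroup (Euc n ≃ᵃⁱ[ℝ] Euc n)) (hG : G = Subgroup.closure (Set.range σf))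
    (hst : ∀ σ ∈ G, ∀ τ ∈ G, ((⇑σ '' Ω) ∩ (⇑τ '' Ω)).Nonempty → σ = τ) :
    ∀ x ∈ Ω, ∀ q ∈ Ω, ∀ τ ∈ G, ‖x - q‖ ≤ ‖x - τ q‖ := by
  intro x hx q hq τ hτ
  obtain ⟨ρ, hρpos, hρball⟩ := Metric.isOpen_iff.mp hΩo q hq
  -- small balls around orbit points lie in the corresponding tiles
  have hball : ∀ τ' : Euc n ≃ᵃⁱ[ℝ] Euc n, ball (τ' q) ρ ⊆ ⇑τ' '' Ω := by
    intro τ' y hy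
    refine ⟨τ'.symm y, hρball ?_, τ'.apply_symm_apply y⟩
    have : dist (τ'.symm y) q = dist y (τ' q) := by
      rw [← τ'.dist_map (τ'.symm y) q, τ'.apply_symm_apply]
    simpa [mem_ball, this] using hy
  -- orbit points of distinct group elements are 2ρ-separated
  have hsep : ∀ τ₁ ∈ G, ∀ τ₂ ∈ G, τ₁ ≠ τ₂ → 2 * ρ ≤ dist (τ₁ q) (τ₂ q) := by
    intro τ₁ h₁ τ₂ h₂ hne12
    by_contra hlt
    push_neg at hlt
    set z := midpoint ℝ (τ₁ q) (τ₂ q) with hz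
    have hz1 : dist z (τ₁ q) < ρ := by
      rw [hz, dist_midpoint_left, Real.norm_two]; linarith
    have hz2 : dist z (τ₂ q) < ρ := by
      rw [hz, dist_midpoint_right, Real.norm_two]; linarith
    exact hne12 (hst τ₁ h₁ τ₂ h₂ ⟨z, hball τ₁ (mem_ball.mpr hz1), hball τ₂ (mem_ball.mpr hz2)⟩)
  set d₀ := ‖x - q‖ with hd₀
  set T : Set (Euc n ≃ᵃⁱ[ℝ] Euc n) := {τ' | τ' ∈ G ∧ ‖x - τ' q‖ ≤ d₀} with hT
  have h1T : (1 : Euc n ≃ᵃⁱ[ℝ] Euc n) ∈ T := ⟨G.one_mem, le_refl _⟩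
  -- finiteness of T via packing
  have hTfin : T.Finite := by
    set P : Set (Euc n) := (fun τ' : Euc n ≃ᵃⁱ[ℝ] Euc n => τ' q) '' T with hP
    have hPcb : P ⊆ closedBall x d₀ := by
      rintro p ⟨τ', hτ', rfl⟩
      rw [mem_closedBall, dist_comm, dist_eq_norm]
      exact hτ'.2
    have hPfin : P.Finite := by
      classical
      obtain ⟨b', hb'sub, hb'fin, hb'cov⟩ :=
        (isCompact_closedBall x d₀).elim_finite_subcover_image
          (b := closedBall x d₀) (c := fun y => ball y ρ)
          (fun y _ => isOpen_ball)
          (fun p hp => mem_iUnion₂.mpr ⟨p, hp, mem_ball_self hρpos⟩)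
      set g : Euc n → Euc n := fun p =>
        if h : ∃ y, y ∈ b' ∧ p ∈ ball y ρ then h.choose else p with hg
      have hgspec : ∀ p ∈ P, g p ∈ b' ∧ p ∈ ball (g p) ρ := by
        intro p hp
        have : p ∈ ⋃ y ∈ b', ball y ρ := hb'cov (hPcb hp)
        obtain ⟨y, hy, hpy⟩ := mem_iUnion₂.mp this
        have hex : ∃ y, y ∈ b' ∧ p ∈ ball y ρ := ⟨y, hy, hpy⟩
        rw [hg]
        simp only [dif_pos hex]
        exact hex.choose_spec
      apply Set.Finite.of_finite_image (f := g)
      · apply hb'fin.subset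
        rintro _ ⟨p, hp, rfl⟩
        exact (hgspec p hp).1
      · rintro p₁ hp₁ p₂ hp₂ hgeq
        obtain ⟨τ₁, hτ₁, rfl⟩ := hp₁
        obtain ⟨τ₂, hτ₂, rfl⟩ := hp₂
        show τ₁ q = τ₂ q
        have hgeq' : g (τ₁ q) = g (τ₂ q) := hgeq
        by_cases hee : τ₁ = τ₂
        · rw [hee]
        · exfalso
          have hd : dist (τ₁ q) (τ₂ q) < 2 * ρ := by
            have a1 : τ₁ q ∈ ball (g (τ₁ q)) ρ := (hgspec _ ⟨τ₁, hτ₁, rfl⟩).2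
            have a2 : τ₂ q ∈ ball (g (τ₂ q)) ρ := (hgspec _ ⟨τ₂, hτ₂, rfl⟩).2
            rw [mem_ball] at a1 a2
            calc dist (τ₁ q) (τ₂ q) ≤ dist (τ₁ q) (g (τ₁ q)) + dist (g (τ₁ q)) (τ₂ q) :=
                  dist_triangle _ _ _
              _ < ρ + ρ := by
                  refine add_lt_add a1 ?_
                  rw [hgeq', dist_comm]
                  exact a2
              _ = 2 * ρ := by ring
          exact absurd (hsep τ₁ hτ₁.1 τ₂ hτ₂.1 hee) (by linarith)
    apply Set.Finite.of_finite_image (f := fun τ' : Euc n ≃ᵃⁱ[ℝ] Euc n => τ' q) hPfin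
    intro τ₁ hτ₁ τ₂ hτ₂ heq
    by_contra hne12
    have heq' : τ₁ q = τ₂ q := heq
    have := hsep τ₁ hτ₁.1 τ₂ hτ₂.1 hne12
    rw [heq', dist_self] at this
    linarith
  -- minimizer
  obtain ⟨τs, hτsT, hmin⟩ := Set.exists_min_image T
    (fun τ' : Euc n ≃ᵃⁱ[ℝ] Euc n => ‖x - τ' q‖) hTfin ⟨1, h1T⟩
  -- the minimizer satisfies all face inequalities weakly at τs.symm x
  have hface : ∀ j, α j ≤ ⟪τs.symm x, v j⟫ := by
    intro j
    by_contra hlt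
    push_neg at hlt
    have hqj : α j < ⟪q, v j⟫ := by rw [hΩ] at hq; exact hq j
    have hlt2 : ‖τs.symm x - σf j q‖ < ‖τs.symm x - q‖ := by
      rw [(hσf j).2 q]
      exact refl_closer (v j) (hσf j).1 (α j) _ q hlt hqj
    have hrw1 : ‖x - (τs * σf j) q‖ = ‖τs.symm x - σf j q‖ := by
      calc ‖x - (τs * σf j) q‖ = dist (τs (τs.symm x)) (τs (σf j q)) := by
            rw [τs.apply_symm_apply x, dist_eq_norm]; rfl
        _ = dist (τs.symm x) (σf j q) := τs.dist_map _ _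
        _ = ‖τs.symm x - σf j q‖ := dist_eq_norm _ _
    have hrw2 : ‖x - τs q‖ = ‖τs.symm x - q‖ := by
      calc ‖x - τs q‖ = dist (τs (τs.symm x)) (τs q) := by
            rw [τs.apply_symm_apply x, dist_eq_norm]
        _ = dist (τs.symm x) q := τs.dist_map _ _
        _ = ‖τs.symm x - q‖ := dist_eq_norm _ _
    have hσfG : σf j ∈ G := by
      rw [hG]; exact Subgroup.subset_closure ⟨j, rfl⟩
    have hmem' : τs * σf j ∈ T := by
      refine ⟨G.mul_mem hτsT.1 hσfG, ?_⟩
      rw [hrw1]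
      refine le_of_lt ?_
      calc ‖τs.symm x - σf j q‖ < ‖τs.symm x - q‖ := hlt2
        _ = ‖x - τs q‖ := hrw2.symm
        _ ≤ d₀ := hτsT.2
    have := hmin _ hmem'
    rw [hrw1, hrw2] at this
    exact absurd (lt_of_le_of_lt this hlt2) (lt_irrefl _)
  -- hence x lies in the closure of the tile of the minimizer, forcing τs = 1
  have hclx : τs.symm x ∈ closure Ω := mem_closure_of_weak v α Ω hΩ hne _ hface
  have hxcl : x ∈ closure (⇑τs '' Ω) := by
    have := image_closure_subset_closure_image (f := ⇑τs) τs.continuous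
      (mem_image_of_mem _ hclx)
    rwa [τs.apply_symm_apply] at this
  have hint : (Ω ∩ ⇑τs '' Ω).Nonempty := mem_closure_iff.mp hxcl Ω hΩo hx
  have h1τ : (1 : Euc n ≃ᵃⁱ[ℝ] Euc n) = τs := by
    apply hst 1 G.one_mem τs hτsT.1
    have him : ⇑(1 : Euc n ≃ᵃⁱ[ℝ] Euc n) '' Ω = Ω := by
      ext y
      constructor
      · rintro ⟨a, ha, rfl⟩; exact ha
      · intro hy; exact ⟨y, hy, rfl⟩
    rw [him]
    exact hint
  -- conclude
  by_cases hτT : τ ∈ T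
  · have := hmin τ hτT
    have h1 : ‖x - τs q‖ = ‖x - q‖ := by rw [← h1τ]; rfl
    rwa [h1] at this
  · have : ¬ ‖x - τ q‖ ≤ d₀ := fun hc => hτT ⟨hτ, hc⟩
    push_neg at this
    exact le_of_lt this

set_option maxHeartbeats 2000000 in
/-- lower bound on reflected distances: for a neighbouring reflection
`σ ∈ R_Ω^{nb}` with metric projection `π_σ` onto the affine subspace fixed by `σ`,
`|r − σ r'| ≳ |π_σ r − π_σ r'| + |π_σ^⊥ r + π_σ^⊥ r'| ≳ |r − r'|` on `Ω`. -/
theorem reflected_distance_lower_bound (n m : ℕ) (v : Fin m → Euc n) (α : Fin m → ℝ)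
    (Ω : Set (Euc n))
    (hΩ : Ω = {r | ∀ j, α j < ⟪r, v j⟫})
    (hne : Ω.Nonempty) (hbd : Bornology.IsBounded Ω)
    (σf : Fin m → (Euc n ≃ᵃⁱ[ℝ] Euc n))
    (hσf : ∀ j, IsHyperplaneReflection (v j) (α j) (σf j))
    (G : Subgroup (Euc n ≃ᵃⁱ[ℝ] Euc n)) (hG : G = Subgroup.closure (Set.range σf))
    -- strict tessellation
    (hst : ∀ σ ∈ G, ∀ τ ∈ G, ((⇑σ '' Ω) ∩ (⇑τ '' Ω)).Nonempty → σ = τ)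
    -- σ is a neighbouring reflection: the closures of σ(Ω) and Ω intersect
    (σ : Euc n ≃ᵃⁱ[ℝ] Euc n) (hσ : σ ∈ G)
    (hnb : (closure (⇑σ '' Ω) ∩ closure Ω).Nonempty)
    -- A: affine subspace of fixed points of σ (extending closure Ω ∩ closure σ(Ω));
    -- π: the metric (orthogonal) projection onto A, π^⊥ = id − π
    (A : Set (Euc n)) (hA : A = {x | σ x = x}) (hAne : A.Nonempty)
    (π : Euc n → Euc n)
    (hπ : ∀ r, π r ∈ A ∧ ∀ a ∈ A, ∀ b ∈ A, ⟪r - π r, a - b⟫ = 0) :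
    ∃ c > 0, ∀ r ∈ Ω, ∀ r' ∈ Ω,
      c * (‖π r - π r'‖ + ‖(r - π r) + (r' - π r')‖) ≤ ‖r - σ r'‖ ∧
      c * ‖r - r'‖ ≤ ‖r - σ r'‖ := by
  -- openness of Ω
  have hΩo : IsOpen Ω := by
    rw [hΩ]
    have hrw : {r : Euc n | ∀ j, α j < ⟪r, v j⟫} = ⋂ j, {r : Euc n | α j < ⟪r, v j⟫} := by
      ext r; simp [Set.mem_iInter]
    rw [hrw]
    exact isOpen_iInter_of_finite fun j =>
      isOpen_lt continuous_const (Continuous.inner continuous_id continuous_const)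
  have hD := dirichlet v α Ω hΩ hne hΩo σf hσf G hG hst
  -- the linear part of σ
  set Λ := σ.linearIsometryEquiv with hΛ
  have hAfix : ∀ a ∈ A, σ a = a := by intro a ha; rw [hA] at ha; exact ha
  have hdec : ∀ (w p : Euc n), σ p = p → σ (w + p) = Λ w + p := by
    intro w p hp
    have h := AffineIsometryEquiv.map_vadd σ p w
    rw [vadd_eq_add, vadd_eq_add, hp] at h
    exact h
  have hΛdiff : ∀ p₁ ∈ A, ∀ p₂ ∈ A, Λ (p₁ - p₂) = p₁ - p₂ := by
    intro p₁ h₁ p₂ h₂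
    have h := hdec (p₁ - p₂) p₂ (hAfix p₂ h₂)
    rw [sub_add_cancel, hAfix p₁ h₁] at h
    exact eq_sub_of_add_eq h.symm
  have hσdec : ∀ x : Euc n, σ x = Λ (x - π x) + π x := by
    intro x
    have h := hdec (x - π x) (π x) (hAfix _ (hπ x).1)
    rwa [sub_add_cancel] at h
  -- orthogonality facts
  have hperp : ∀ x : Euc n, ∀ p₁ ∈ A, ∀ p₂ ∈ A, ⟪x - π x, p₁ - p₂⟫ = 0 := fun x => (hπ x).2
  have hperpΛ : ∀ x : Euc n, ∀ p₁ ∈ A, ∀ p₂ ∈ A, ⟪Λ (x - π x), p₁ - p₂⟫ = 0 := by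
    intro x p₁ h₁ p₂ h₂
    calc ⟪Λ (x - π x), p₁ - p₂⟫ = ⟪Λ (x - π x), Λ (p₁ - p₂)⟫ := by rw [hΛdiff p₁ h₁ p₂ h₂]
      _ = ⟪x - π x, p₁ - p₂⟫ := Λ.inner_map_map _ _
      _ = 0 := hperp x p₁ h₁ p₂ h₂
  -- Pythagoras decomposition of the distance to a reflected point
  have hpyth : ∀ x q : Euc n,
      ‖x - σ q‖ ^ 2 = ‖π x - π q‖ ^ 2 + ‖(x - π x) - Λ (q - π q)‖ ^ 2 := by
    intro x q
    have hid : x - σ q = (π x - π q) + ((x - π x) - Λ (q - π q)) := by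
      rw [hσdec q]; abel
    have c1 : ⟪π x - π q, x - π x⟫ = 0 := by
      rw [real_inner_comm]; exact hperp x (π x) (hπ x).1 (π q) (hπ q).1
    have c2 : ⟪π x - π q, Λ (q - π q)⟫ = 0 := by
      rw [real_inner_comm]; exact hperpΛ q (π x) (hπ x).1 (π q) (hπ q).1
    have hcross : ⟪π x - π q, (x - π x) - Λ (q - π q)⟫ = 0 := by
      rw [inner_sub_right, c1, c2]; ring
    rw [hid, norm_add_sq_real, hcross]
    ring
  have hpyth' : ∀ x q : Euc n,
      ‖x - q‖ ^ 2 = ‖π x - π q‖ ^ 2 + ‖(x - π x) - (q - π q)‖ ^ 2 := by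
    intro x q
    have hid : x - q = (π x - π q) + ((x - π x) - (q - π q)) := by abel
    have c1 : ⟪π x - π q, x - π x⟫ = 0 := by
      rw [real_inner_comm]; exact hperp x (π x) (hπ x).1 (π q) (hπ q).1
    have c2 : ⟪π x - π q, q - π q⟫ = 0 := by
      rw [real_inner_comm]; exact hperp q (π x) (hπ x).1 (π q) (hπ q).1
    have hcross : ⟪π x - π q, (x - π x) - (q - π q)⟫ = 0 := by
      rw [inner_sub_right, c1, c2]; ring
    rw [hid, norm_add_sq_real, hcross]
    ring
  -- the key inner-product inequality from the Dirichlet property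
  have hE : ∀ x ∈ Ω, ∀ q ∈ Ω, ⟪x - π x, Λ (q - π q)⟫ ≤ ⟪x - π x, q - π q⟫ := by
    intro x hx q hq
    have h1 : ‖x - q‖ ≤ ‖x - σ q‖ := hD x hx q hq σ hσ
    have h2 : ‖x - q‖ ^ 2 ≤ ‖x - σ q‖ ^ 2 := pow_le_pow_left₀ (norm_nonneg _) h1 2
    rw [hpyth x q, hpyth' x q] at h2
    have h3 : ‖(x - π x) - (q - π q)‖ ^ 2 ≤ ‖(x - π x) - Λ (q - π q)‖ ^ 2 := by linarith
    have e1 : ‖(x - π x) - (q - π q)‖ ^ 2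
        = ‖x - π x‖ ^ 2 - 2 * ⟪x - π x, q - π q⟫ + ‖q - π q‖ ^ 2 := norm_sub_sq_real _ _
    have e2 : ‖(x - π x) - Λ (q - π q)‖ ^ 2
        = ‖x - π x‖ ^ 2 - 2 * ⟪x - π x, Λ (q - π q)⟫ + ‖Λ (q - π q)‖ ^ 2 := norm_sub_sq_real _ _
    have e3 : ‖Λ (q - π q)‖ = ‖q - π q‖ := Λ.norm_map _
    rw [e1, e2, e3] at h3
    linarith
  -- the set of normalized perpendicular directions
  set S : Set (Euc n) :=
    {w | ∃ r, r ∈ Ω ∧ r - π r ≠ 0 ∧ w = ‖r - π r‖⁻¹ • (r - π r)} with hS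
  -- uniform angle bound
  have hC : ∃ c₁ : ℝ, 0 < c₁ ∧ c₁ ≤ 1 ∧ ∀ r ∈ Ω, ∀ r' ∈ Ω,
      c₁ * (‖r - π r‖ + ‖r' - π r'‖) ≤ ‖(r - π r) - Λ (r' - π r')‖ := by
    by_cases hSne : S.Nonempty
    · -- compactness setup
      have hSsphere : S ⊆ sphere (0 : Euc n) 1 := by
        rintro w ⟨r, hr, hu, rfl⟩
        rw [mem_sphere_iff_norm, sub_zero, norm_smul, norm_inv, norm_norm]
        rw [inv_mul_cancel₀ (norm_ne_zero_iff.mpr hu)]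
      have hclS : closure S ⊆ sphere (0 : Euc n) 1 :=
        closure_minimal hSsphere isClosed_sphere
      have hcomp : IsCompact (closure S) := by
        apply Metric.isCompact_of_isClosed_isBounded isClosed_closure
        exact (Metric.isBounded_closedBall (x := (0:Euc n)) (r := 1)).subset
          (hclS.trans sphere_subset_closedBall)
      have hK : IsCompact ((closure S) ×ˢ (closure S)) := hcomp.prod hcomp
      obtain ⟨w₀, hw₀⟩ := hSne
      have hKne : ((closure S) ×ˢ (closure S)).Nonempty :=
        ⟨(w₀, w₀), subset_closure hw₀, subset_closure hw₀⟩
      have hf : Continuous (fun p : Euc n × Euc n => ⟪p.1, Λ p.2⟫) :=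
        Continuous.inner continuous_fst (Λ.continuous.comp continuous_snd)
      obtain ⟨⟨a₀, b₀⟩, hmemK, hmax⟩ := hK.exists_isMaxOn hKne hf.continuousOn
      have ha₀ : ‖a₀‖ = 1 := by
        have := hclS (mem_prod.mp hmemK).1
        rwa [mem_sphere_iff_norm, sub_zero] at this
      have hb₀ : ‖b₀‖ = 1 := by
        have := hclS (mem_prod.mp hmemK).2
        rwa [mem_sphere_iff_norm, sub_zero] at this
      -- (E) extends to the closure
      have hEclos : ∀ p ∈ (closure S) ×ˢ (closure S),
          ⟪p.1, Λ p.2⟫ ≤ ⟪(p.1 : Euc n), p.2⟫ := by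
        have hCclosed : IsClosed {p : Euc n × Euc n | ⟪p.1, Λ p.2⟫ ≤ ⟪(p.1 : Euc n), p.2⟫} :=
          isClosed_le hf (Continuous.inner continuous_fst continuous_snd)
        have hSS : S ×ˢ S ⊆ {p : Euc n × Euc n | ⟪p.1, Λ p.2⟫ ≤ ⟪(p.1 : Euc n), p.2⟫} := by
          rintro ⟨w₁, w₂⟩ ⟨⟨r, hr, hu, rfl⟩, ⟨r', hr', hu', rfl⟩⟩
          simp only [Set.mem_setOf_eq]
          rw [Λ.map_smul, real_inner_smul_left, real_inner_smul_left,
            real_inner_smul_right, real_inner_smul_right]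
          have h0 : (0:ℝ) ≤ ‖r - π r‖⁻¹ := by positivity
          have h0' : (0:ℝ) ≤ ‖r' - π r'‖⁻¹ := by positivity
          exact mul_le_mul_of_nonneg_left
            (mul_le_mul_of_nonneg_left (hE r hr r' hr') h0') h0
        rw [← closure_prod_eq]
        exact fun p hp => closure_minimal hSS hCclosed hp
      -- the maximum is strictly below 1
      have hmax1 : ⟪a₀, Λ b₀⟫ < 1 := by
        rcases lt_or_ge ⟪a₀, Λ b₀⟫ 1 with h | h
        · exact h
        · exfalso
          have hcs : ⟪a₀, Λ b₀⟫ ≤ 1 := by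
            have := real_inner_le_norm a₀ (Λ b₀)
            rwa [ha₀, Λ.norm_map, hb₀, one_mul] at this
          have heq : ⟪a₀, Λ b₀⟫ = 1 := le_antisymm hcs h
          have hΛb₀ : ‖Λ b₀‖ = 1 := by rw [Λ.norm_map]; exact hb₀
          have hab : a₀ = Λ b₀ := (inner_eq_one_iff_of_norm_eq_one ha₀ hΛb₀).mp heq
          have h1le : (1:ℝ) ≤ ⟪a₀, b₀⟫ := by
            have := hEclos (a₀, b₀) hmemK
            simpa [heq] using this
          have hcs2 : ⟪a₀, b₀⟫ ≤ 1 := by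
            have := real_inner_le_norm a₀ b₀
            rwa [ha₀, hb₀, one_mul] at this
          have hab2 : a₀ = b₀ := (inner_eq_one_iff_of_norm_eq_one ha₀ hb₀).mp
            (le_antisymm hcs2 h1le)
          have hfix : Λ b₀ = b₀ := by rw [← hab, hab2]
          -- b₀ is perpendicular to all of A's differences, but also fixed: contradiction
          have hb₀W : ∀ p₁ ∈ A, ∀ p₂ ∈ A, ⟪b₀, p₁ - p₂⟫ = 0 := by
            have hWclosed : IsClosed {w : Euc n | ∀ p₁ ∈ A, ∀ p₂ ∈ A, ⟪w, p₁ - p₂⟫ = 0} := by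
              have : {w : Euc n | ∀ p₁ ∈ A, ∀ p₂ ∈ A, ⟪w, p₁ - p₂⟫ = 0}
                  = ⋂ p₁ ∈ A, ⋂ p₂ ∈ A, {w : Euc n | ⟪w, p₁ - p₂⟫ = 0} := by
                ext w; simp [Set.mem_iInter]
              rw [this]
              exact isClosed_biInter fun p₁ _ => isClosed_biInter fun p₂ _ =>
                isClosed_eq (Continuous.inner continuous_id continuous_const) continuous_const
            have hSW : S ⊆ {w : Euc n | ∀ p₁ ∈ A, ∀ p₂ ∈ A, ⟪w, p₁ - p₂⟫ = 0} := by
              rintro w ⟨r, hr, hu, rfl⟩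
              intro p₁ h₁ p₂ h₂
              rw [real_inner_smul_left, hperp r p₁ h₁ p₂ h₂, mul_zero]
            exact closure_minimal hSW hWclosed (mem_prod.mp hmemK).2
          obtain ⟨aA, haA⟩ := hAne
          have hmemA : b₀ + aA ∈ A := by
            rw [hA]
            show σ (b₀ + aA) = b₀ + aA
            rw [hdec b₀ aA (hAfix aA haA), hfix]
          have := hb₀W (b₀ + aA) hmemA aA haA
          rw [add_sub_cancel_right] at this
          rw [real_inner_self_eq_norm_sq, hb₀] at this
          norm_num at this
      -- choose the constant
      set δ := 1 - ⟪a₀, Λ b₀⟫ with hδ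
      have hδpos : 0 < δ := by rw [hδ]; linarith
      set δ₁ := min δ 1 with hδ₁
      have hδ₁pos : 0 < δ₁ := lt_min hδpos one_pos
      have hδ₁le : δ₁ ≤ 1 := min_le_right _ _
      refine ⟨Real.sqrt (δ₁ / 2), Real.sqrt_pos.mpr (by positivity), ?_, ?_⟩
      · calc Real.sqrt (δ₁ / 2) ≤ Real.sqrt 1 := Real.sqrt_le_sqrt (by linarith)
          _ = 1 := Real.sqrt_one
      intro r hr r' hr'
      have hc₁sq : Real.sqrt (δ₁ / 2) ^ 2 = δ₁ / 2 := Real.sq_sqrt (by positivity)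
      have hc₁le1 : Real.sqrt (δ₁ / 2) ≤ 1 := by
        calc Real.sqrt (δ₁ / 2) ≤ Real.sqrt 1 := Real.sqrt_le_sqrt (by linarith)
          _ = 1 := Real.sqrt_one
      by_cases hu : r - π r = 0
      · rw [hu, zero_sub, norm_neg, norm_zero, Λ.norm_map, zero_add]
        exact mul_le_of_le_one_left (norm_nonneg _) hc₁le1
      by_cases hu' : r' - π r' = 0
      · rw [hu', map_zero, sub_zero, norm_zero, add_zero]
        exact mul_le_of_le_one_left (norm_nonneg _) hc₁le1
      · -- both nonzero: use the angle bound
        have hmem1 : ‖r - π r‖⁻¹ • (r - π r) ∈ closure S :=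
          subset_closure ⟨r, hr, hu, rfl⟩
        have hmem2 : ‖r' - π r'‖⁻¹ • (r' - π r') ∈ closure S :=
          subset_closure ⟨r', hr', hu', rfl⟩
        have hang := hmax (Set.mk_mem_prod hmem1 hmem2)
        simp only [Set.mem_setOf_eq] at hang
        have hscale : ⟪‖r - π r‖⁻¹ • (r - π r), Λ (‖r' - π r'‖⁻¹ • (r' - π r'))⟫
            = ‖r - π r‖⁻¹ * (‖r' - π r'‖⁻¹ * ⟪r - π r, Λ (r' - π r')⟫) := by
          rw [Λ.map_smul, real_inner_smul_left, real_inner_smul_right]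
        have hnu : (0:ℝ) < ‖r - π r‖ := norm_pos_iff.mpr hu
        have hnu' : (0:ℝ) < ‖r' - π r'‖ := norm_pos_iff.mpr hu'
        have hinner : ⟪r - π r, Λ (r' - π r')⟫ ≤ (1 - δ₁) * (‖r - π r‖ * ‖r' - π r'‖) := by
          have h1 : ⟪‖r - π r‖⁻¹ • (r - π r), Λ (‖r' - π r'‖⁻¹ • (r' - π r'))⟫ ≤ 1 - δ₁ := by
            have h2 : ⟪a₀, Λ b₀⟫ ≤ 1 - δ₁ := by
              rw [hδ₁, hδ]
              have : min (1 - ⟪a₀, Λ b₀⟫) 1 ≤ 1 - ⟪a₀, Λ b₀⟫ := min_le_left _ _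
              linarith
            calc ⟪‖r - π r‖⁻¹ • (r - π r), Λ (‖r' - π r'‖⁻¹ • (r' - π r'))⟫
                ≤ ⟪a₀, Λ b₀⟫ := hang
              _ ≤ 1 - δ₁ := h2
          rw [hscale] at h1
          calc ⟪r - π r, Λ (r' - π r')⟫
              = (‖r - π r‖ * ‖r' - π r'‖) *
                (‖r - π r‖⁻¹ * (‖r' - π r'‖⁻¹ * ⟪r - π r, Λ (r' - π r')⟫)) := by
                field_simp
            _ ≤ (‖r - π r‖ * ‖r' - π r'‖) * (1 - δ₁) := by
                apply mul_le_mul_of_nonneg_left h1 (by positivity)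
            _ = (1 - δ₁) * (‖r - π r‖ * ‖r' - π r'‖) := by ring
        apply le_of_pow_le_pow_left₀ (n := 2) (by norm_num) (norm_nonneg _)
        rw [mul_pow, hc₁sq, norm_sub_sq_real, Λ.norm_map]
        nlinarith [hinner, norm_nonneg (r - π r), norm_nonneg (r' - π r'),
          sq_nonneg (‖r - π r‖ - ‖r' - π r'‖), sq_nonneg (‖r - π r‖ + ‖r' - π r'‖)]
    · -- S empty: all perpendicular parts vanish on Ω
      refine ⟨1, one_pos, le_refl 1, ?_⟩
      intro r hr r' hr'
      have hz : ∀ s ∈ Ω, s - π s = 0 := by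
        intro s hs
        by_contra hu
        exact hSne ⟨‖s - π s‖⁻¹ • (s - π s), s, hs, hu, rfl⟩
      have hm0 : Λ (0 : Euc n) = 0 := Λ.map_zero
      rw [hz r hr, hz r' hr', hm0, sub_zero, norm_zero]
      norm_num
  -- final assembly
  obtain ⟨c₁, hc₁pos, hc₁le, hc₁⟩ := hC
  refine ⟨c₁ / 2, by positivity, ?_⟩
  intro r hr r' hr'
  have hkey := hc₁ r hr r' hr'
  have hpy := hpyth r r'
  have hFa : ‖π r - π r'‖ ≤ ‖r - σ r'‖ := by
    apply le_of_pow_le_pow_left₀ (n := 2) (by norm_num) (norm_nonneg _)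
    nlinarith [hpy, sq_nonneg ‖(r - π r) - Λ (r' - π r')‖]
  have hFe : ‖(r - π r) - Λ (r' - π r')‖ ≤ ‖r - σ r'‖ := by
    apply le_of_pow_le_pow_left₀ (n := 2) (by norm_num) (norm_nonneg _)
    nlinarith [hpy, sq_nonneg ‖π r - π r'‖]
  have hb : ‖(r - π r) + (r' - π r')‖ ≤ ‖r - π r‖ + ‖r' - π r'‖ := norm_add_le _ _
  constructor
  · have h1 : c₁ * ‖(r - π r) + (r' - π r')‖ ≤ ‖r - σ r'‖ := by
      calc c₁ * ‖(r - π r) + (r' - π r')‖ ≤ c₁ * (‖r - π r‖ + ‖r' - π r'‖) := by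
            exact mul_le_mul_of_nonneg_left hb (le_of_lt hc₁pos)
        _ ≤ ‖(r - π r) - Λ (r' - π r')‖ := hkey
        _ ≤ ‖r - σ r'‖ := hFe
    have h2 : c₁ * ‖π r - π r'‖ ≤ ‖r - σ r'‖ := by
      calc c₁ * ‖π r - π r'‖ ≤ 1 * ‖π r - π r'‖ :=
            mul_le_mul_of_nonneg_right hc₁le (norm_nonneg _)
        _ = ‖π r - π r'‖ := one_mul _
        _ ≤ ‖r - σ r'‖ := hFa
    nlinarith [h1, h2]
  · have hDrr : ‖r - r'‖ ≤ ‖r - σ r'‖ := hD r hr r' hr' σ hσ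
    have : c₁ / 2 * ‖r - r'‖ ≤ 1 * ‖r - r'‖ :=
      mul_le_mul_of_nonneg_right (by linarith) (norm_nonneg _)
    rw [one_mul] at this
    linarith
end
end

section
/- Let Ω ⊂ R^n be an open polytope that strictly tessellates R^n, σ ∈ R_Ω, and let H be the hyperplane extending a boundary face of σ(Ω). Then H ∩ Ω = ∅. -/
open MeasureTheory Metric Set
open scoped RealInnerProductSpace

noncomputable section

/-- if `Ω` strictly tessellates `ℝⁿ`, `σ ∈ R_Ω`, and `H` is the hyperplane
extending a boundary face of `σ(Ω)`, then `H ∩ Ω = ∅`. -/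
theorem strictlyTessellating_hyperplane_disjoint (n m : ℕ) (v : Fin m → Euc n)
    (α : Fin m → ℝ) (Ω : Set (Euc n))
    (hΩ : Ω = {r | ∀ j, α j < ⟪r, v j⟫})
    (hne : Ω.Nonempty) (hbd : Bornology.IsBounded Ω)
    (σf : Fin m → (Euc n ≃ᵃⁱ[ℝ] Euc n))
    (hσf : ∀ j, IsHyperplaneReflection (v j) (α j) (σf j))
    (G : Subgroup (Euc n ≃ᵃⁱ[ℝ] Euc n)) (hG : G = Subgroup.closure (Set.range σf))
    (hst : ∀ σ ∈ G, ∀ τ ∈ G, ((⇑σ '' Ω) ∩ (⇑τ '' Ω)).Nonempty → σ = τ)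
    (σ : Euc n ≃ᵃⁱ[ℝ] Euc n) (hσ : σ ∈ G) (ℓ : Fin m)
    -- H is the hyperplane extending the face σ(F_ℓ) of σ(Ω)
    (H : Set (Euc n)) (hH : H = ⇑σ '' {r | ⟪r, v ℓ⟫ = α ℓ}) :
    H ∩ Ω = ∅ := by
  subst hH hG
  rw [Set.eq_empty_iff_forall_notMem]
  rintro x ⟨⟨y, hy, rfl⟩, hx⟩
  set ρ := σ * σf ℓ * σ⁻¹ with hρ
  have hℓG : σf ℓ ∈ Subgroup.closure (Set.range σf) :=
    Subgroup.subset_closure ⟨ℓ, rfl⟩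
  have hρG : ρ ∈ Subgroup.closure (Set.range σf) :=
    mul_mem (mul_mem hσ hℓG) (inv_mem hσ)
  have hfixy : σf ℓ y = y := by
    rw [(hσf ℓ).2 y, hy]
    simp
  have hfix : ρ (σ y) = σ y := by
    simp only [hρ, AffineIsometryEquiv.coe_mul, Function.comp_apply,
      AffineIsometryEquiv.coe_inv]
    rw [AffineIsometryEquiv.symm_apply_apply, hfixy]
  have hmem : σ y ∈ (⇑ρ '' Ω) ∩ (⇑(1 : Euc n ≃ᵃⁱ[ℝ] Euc n) '' Ω) :=
    ⟨⟨σ y, hx, hfix⟩, ⟨σ y, hx, rfl⟩⟩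
  have hρ1 : ρ = 1 := hst ρ hρG 1 (one_mem _) ⟨σ y, hmem⟩
  have hσℓ1 : σf ℓ = 1 := by
    have h : σf ℓ = σ⁻¹ * ρ * σ := by rw [hρ]; group
    rw [hρ1] at h
    simpa using h
  -- derive a contradiction: a hyperplane reflection is not the identity
  have hunit : ⟪v ℓ, v ℓ⟫ = 1 := by
    rw [real_inner_self_eq_norm_sq, (hσf ℓ).1]; norm_num
  set r : Euc n := (α ℓ + 1) • v ℓ with hr
  have hval : σf ℓ r = r - (2 : ℝ) • v ℓ := by
    rw [(hσf ℓ).2 r, hr, real_inner_smul_left, hunit]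
    ring_nf
  rw [hσℓ1] at hval
  simp only [AffineIsometryEquiv.coe_one, id_eq] at hval
  have hv0 : v ℓ = 0 := by
    have : (2 : ℝ) • v ℓ = 0 := by
      have := sub_eq_self.mp hval.symm
      exact this
    simpa using this
  have := (hσf ℓ).1
  rw [hv0] at this
  simp at this
end
end
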